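/- Let A be a monoid with an absorbing element ⊤ that is ⊤-cancellative, and let B be a semigroup with an absorbing element ⊥ such that B has at most 3 elements, x·y = ⊥ for all distinct x, y ∈ B, b² ∈ {b, ⊥} for every b ∈ B, and if b² = ⊥ for some b ∈ B \ {⊥} then B = {⊥, b}. Let R = A ⊔ B (disjoint union) with multiplication extending those of A and B by x·y = y·x = y for all x ∈ A and y ∈ B, and with the partial order in which ⊥ is the bottom, ⊤ is the top, and all other elements are pairwise incomparable (so distinct elements of R \ {⊥, ⊤} have join ⊤ and meet ⊥). Then R is a lattice-ordered monoid in which multiplication is order-preserving and distributes over binary joins, and for all x, z ∈ R the sets {y : x·y ≤ z} and {y : y·x ≤ z} have maximum elements; hence R is the reduct of a residuated lattice based on M_X with X = (A ∪ B) \ {⊥, ⊤}. -/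

import Mathlib

/-- Multiplication on the disjoint union `A ⊔ B`, extending those of `A` and `B` by
`x·y = y·x = y` for `x ∈ A`, `y ∈ B`. -/
def RMul8 {A B : Type*} [Mul A] [Mul B] : (A ⊕ B) → (A ⊕ B) → (A ⊕ B)
  | Sum.inl a, Sum.inl a' => Sum.inl (a * a')
  | Sum.inl _, Sum.inr b => Sum.inr b
  | Sum.inr b, Sum.inl _ => Sum.inr b
  | Sum.inr b, Sum.inr b' => Sum.inr (b * b')

/-- The order on `A ⊔ B` with bottom `⊥ ∈ B`, top `⊤ ∈ A`, and all other elements pairwise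
incomparable. -/
def RLe8 {A B : Type*} (top : A) (bot : B) (x y : A ⊕ B) : Prop :=
  x = y ∨ x = Sum.inr bot ∨ y = Sum.inl top

open scoped Classical in
/-- Join in the lattice `M_X` on `A ⊔ B`. -/
noncomputable def RJoin8 {A B : Type*} (top : A) (bot : B) (x y : A ⊕ B) : A ⊕ B :=
  if x = y then x else if x = Sum.inr bot then y
  else if y = Sum.inr bot then x else Sum.inl top

open scoped Classical in
/-- Meet in the lattice `M_X` on `A ⊔ B`. -/
noncomputable def RMeet8 {A B : Type*} (top : A) (bot : B) (x y : A ⊕ B) : A ⊕ B :=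
  if x = y then x else if x = Sum.inl top then y
  else if y = Sum.inl top then x else Sum.inr bot

set_option linter.unusedSectionVars false

section Aux

variable {A B : Type*} [Monoid A] [Mul B] (top : A) (bot : B)

lemma rle_refl (x : A ⊕ B) : RLe8 top bot x x := Or.inl rfl
lemma rle_bot (x : A ⊕ B) : RLe8 top bot (Sum.inr bot) x := Or.inr (Or.inl rfl)
lemma rle_top (x : A ⊕ B) : RLe8 top bot x (Sum.inl top) := Or.inr (Or.inr rfl)

lemma rjoin_self (x : A ⊕ B) : RJoin8 top bot x x = x := if_pos rfl

lemma rjoin_bot_left (y : A ⊕ B) : RJoin8 top bot (Sum.inr bot) y = y := by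
  unfold RJoin8; split_ifs <;> simp_all

lemma rjoin_bot_right (x : A ⊕ B) : RJoin8 top bot x (Sum.inr bot) = x := by
  unfold RJoin8; split_ifs <;> simp_all

lemma rjoin_ne (x y : A ⊕ B) (hxy : x ≠ y) (hx : x ≠ Sum.inr bot) (hy : y ≠ Sum.inr bot) :
    RJoin8 top bot x y = Sum.inl top := by
  unfold RJoin8; split_ifs <;> tauto

@[simp] lemma rmul_ll (a a' : A) :
    RMul8 (A := A) (B := B) (Sum.inl a) (Sum.inl a') = Sum.inl (a * a') := rfl
@[simp] lemma rmul_lr (a : A) (b : B) :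
    RMul8 (Sum.inl a) (Sum.inr b) = Sum.inr b := rfl
@[simp] lemma rmul_rl (b : B) (a : A) :
    RMul8 (Sum.inr b) (Sum.inl a) = Sum.inr b := rfl
@[simp] lemma rmul_rr (b b' : B) :
    RMul8 (A := A) (Sum.inr b) (Sum.inr b') = Sum.inr (b * b') := rfl

lemma rmul_bot_right (hBabs : ∀ b : B, bot * b = bot ∧ b * bot = bot) (x : A ⊕ B) :
    RMul8 x (Sum.inr bot) = Sum.inr bot := by
  cases x with
  | inl a => rfl
  | inr b => show Sum.inr (b * bot) = _; rw [(hBabs b).2]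

lemma rmul_bot_left (hBabs : ∀ b : B, bot * b = bot ∧ b * bot = bot) (x : A ⊕ B) :
    RMul8 (Sum.inr bot) x = Sum.inr bot := by
  cases x with
  | inl a => rfl
  | inr b => show Sum.inr (bot * b) = _; rw [(hBabs b).1]

lemma key_left
    (hBabs : ∀ b : B, bot * b = bot ∧ b * bot = bot)
    (hBcard : ∀ x y z w : B, x = y ∨ x = z ∨ x = w ∨ y = z ∨ y = w ∨ z = w)
    (hBmul : ∀ x y : B, x ≠ y → x * y = bot)
    (hBsq : ∀ b : B, b * b = b ∨ b * b = bot)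
    (hBnil : ∀ b : B, b ≠ bot → b * b = bot → ∀ c : B, c = bot ∨ c = b)
    (b : B) (z : A ⊕ B) (hb : b ≠ bot) (hz : ¬ RLe8 top bot (Sum.inr b) z) :
    ∃ m, RLe8 top bot (RMul8 (Sum.inr b) m) z ∧
      ∀ y, RLe8 top bot (RMul8 (Sum.inr b) y) z → RLe8 top bot y m := by
  by_cases hbb : b * b = bot
  · refine ⟨Sum.inr b, ?_, ?_⟩
    · show RLe8 top bot (Sum.inr (b * b)) z
      rw [hbb]; exact Or.inr (Or.inl rfl)
    · intro y h
      cases y with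
      | inl a => exact absurd h hz
      | inr b'' =>
        rcases hBnil b hb hbb b'' with rfl | rfl
        · exact Or.inr (Or.inl rfl)
        · exact Or.inl rfl
  · have hbsq : b * b = b := (hBsq b).resolve_right hbb
    by_cases hex : ∃ c', c' ≠ bot ∧ c' ≠ b
    · obtain ⟨c', hc1, hc2⟩ := hex
      refine ⟨Sum.inr c', ?_, ?_⟩
      · show RLe8 top bot (Sum.inr (b * c')) z
        rw [hBmul b c' (Ne.symm hc2)]; exact Or.inr (Or.inl rfl)
      · intro y h
        cases y with
        | inl a => exact absurd h hz
        | inr b'' =>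
          by_cases h1 : b'' = bot
          · subst h1; exact Or.inr (Or.inl rfl)
          by_cases h2 : b'' = c'
          · subst h2; exact Or.inl rfl
          by_cases h3 : b'' = b
          · subst h3
            have h' : RLe8 top bot (Sum.inr (b'' * b'')) z := h
            rw [hbsq] at h'
            exact absurd h' hz
          · rcases hBcard b'' c' b bot with h'|h'|h'|h'|h'|h'
            · exact absurd h' h2
            · exact absurd h' h3
            · exact absurd h' h1
            · exact absurd h' hc2
            · exact absurd h' hc1
            · exact absurd h' hb
    · refine ⟨Sum.inr bot, ?_, ?_⟩
      · show RLe8 top bot (Sum.inr (b * bot)) z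
        rw [(hBabs b).2]; exact Or.inr (Or.inl rfl)
      · intro y h
        cases y with
        | inl a => exact absurd h hz
        | inr b'' =>
          by_cases h1 : b'' = bot
          · subst h1; exact Or.inl rfl
          · push_neg at hex
            have h3 : b'' = b := hex b'' h1
            subst h3
            have h' : RLe8 top bot (Sum.inr (b'' * b'')) z := h
            rw [hbsq] at h'
            exact absurd h' hz

lemma key_right
    (hBabs : ∀ b : B, bot * b = bot ∧ b * bot = bot)
    (hBcard : ∀ x y z w : B, x = y ∨ x = z ∨ x = w ∨ y = z ∨ y = w ∨ z = w)
    (hBmul : ∀ x y : B, x ≠ y → x * y = bot)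
    (hBsq : ∀ b : B, b * b = b ∨ b * b = bot)
    (hBnil : ∀ b : B, b ≠ bot → b * b = bot → ∀ c : B, c = bot ∨ c = b)
    (b : B) (z : A ⊕ B) (hb : b ≠ bot) (hz : ¬ RLe8 top bot (Sum.inr b) z) :
    ∃ m, RLe8 top bot (RMul8 m (Sum.inr b)) z ∧
      ∀ y, RLe8 top bot (RMul8 y (Sum.inr b)) z → RLe8 top bot y m := by
  by_cases hbb : b * b = bot
  · refine ⟨Sum.inr b, ?_, ?_⟩
    · show RLe8 top bot (Sum.inr (b * b)) z
      rw [hbb]; exact Or.inr (Or.inl rfl)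
    · intro y h
      cases y with
      | inl a => exact absurd h hz
      | inr b'' =>
        rcases hBnil b hb hbb b'' with rfl | rfl
        · exact Or.inr (Or.inl rfl)
        · exact Or.inl rfl
  · have hbsq : b * b = b := (hBsq b).resolve_right hbb
    by_cases hex : ∃ c', c' ≠ bot ∧ c' ≠ b
    · obtain ⟨c', hc1, hc2⟩ := hex
      refine ⟨Sum.inr c', ?_, ?_⟩
      · show RLe8 top bot (Sum.inr (c' * b)) z
        rw [hBmul c' b hc2]; exact Or.inr (Or.inl rfl)
      · intro y h
        cases y with
        | inl a => exact absurd h hz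
        | inr b'' =>
          by_cases h1 : b'' = bot
          · subst h1; exact Or.inr (Or.inl rfl)
          by_cases h2 : b'' = c'
          · subst h2; exact Or.inl rfl
          by_cases h3 : b'' = b
          · subst h3
            have h' : RLe8 top bot (Sum.inr (b'' * b'')) z := h
            rw [hbsq] at h'
            exact absurd h' hz
          · rcases hBcard b'' c' b bot with h'|h'|h'|h'|h'|h'
            · exact absurd h' h2
            · exact absurd h' h3
            · exact absurd h' h1
            · exact absurd h' hc2
            · exact absurd h' hc1
            · exact absurd h' hb
    · refine ⟨Sum.inr bot, ?_, ?_⟩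
      · show RLe8 top bot (Sum.inr (bot * b)) z
        rw [(hBabs b).1]; exact Or.inr (Or.inl rfl)
      · intro y h
        cases y with
        | inl a => exact absurd h hz
        | inr b'' =>
          by_cases h1 : b'' = bot
          · subst h1; exact Or.inl rfl
          · push_neg at hex
            have h3 : b'' = b := hex b'' h1
            subst h3
            have h' : RLe8 top bot (Sum.inr (b'' * b'')) z := h
            rw [hbsq] at h'
            exact absurd h' hz

lemma ldist
    (hAabs : ∀ a : A, top * a = top ∧ a * top = top)
    (hAcanc : ∀ x y z : A, (x * y = x * z → x * y ≠ top → y = z) ∧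
      (y * x = z * x → y * x ≠ top → y = z))
    (hBabs : ∀ b : B, bot * b = bot ∧ b * bot = bot)
    (hBcard : ∀ x y z w : B, x = y ∨ x = z ∨ x = w ∨ y = z ∨ y = w ∨ z = w)
    (hBmul : ∀ x y : B, x ≠ y → x * y = bot)
    (hBsq : ∀ b : B, b * b = b ∨ b * b = bot)
    (hBnil : ∀ b : B, b ≠ bot → b * b = bot → ∀ c : B, c = bot ∨ c = b)
    (x y z : A ⊕ B) :
    RMul8 x (RJoin8 top bot y z) = RJoin8 top bot (RMul8 x y) (RMul8 x z) := by
  cases x with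
  | inl a =>
    cases y with
    | inl a1 =>
      cases z with
      | inl a2 =>
        by_cases h : a1 = a2
        · subst h; rw [rjoin_self, rjoin_self]
        · rw [rjoin_ne top bot _ _ (by simp [h]) (by simp) (by simp)]
          simp only [rmul_ll, (hAabs a).2]
          by_cases he : a * a1 = a * a2
          · have ht : a * a1 = top := by
              by_contra hne
              exact h ((hAcanc a a1 a2).1 he hne)
            rw [← he, rjoin_self, ht]
          · rw [rjoin_ne top bot _ _ (by simp [he]) (by simp) (by simp)]
      | inr b2 =>
        by_cases h : b2 = bot
        · subst h; rw [rjoin_bot_right]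
          simp only [rmul_ll, rmul_lr]
          rw [rjoin_bot_right]
        · rw [rjoin_ne top bot _ _ (by simp) (by simp) (by simp [h])]
          simp only [rmul_ll, rmul_lr, (hAabs a).2]
          rw [rjoin_ne top bot _ _ (by simp) (by simp) (by simp [h])]
    | inr b1 =>
      cases z with
      | inl a2 =>
        by_cases h : b1 = bot
        · subst h; rw [rjoin_bot_left]
          simp only [rmul_ll, rmul_lr]
          rw [rjoin_bot_left]
        · rw [rjoin_ne top bot _ _ (by simp) (by simp [h]) (by simp)]
          simp only [rmul_ll, rmul_lr, (hAabs a).2]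
          rw [rjoin_ne top bot _ _ (by simp [h]) (by simp [h]) (by simp)]
      | inr b2 =>
        by_cases h : b1 = b2
        · subst h; rw [rjoin_self, rjoin_self]
        by_cases h1 : b1 = bot
        · subst h1; rw [rjoin_bot_left]
          simp only [rmul_lr]
          rw [rjoin_bot_left]
        by_cases h2 : b2 = bot
        · subst h2; rw [rjoin_bot_right]
          simp only [rmul_lr]
          rw [rjoin_bot_right]
        · rw [rjoin_ne top bot _ _ (by simp [h]) (by simp [h1]) (by simp [h2])]
          simp only [rmul_ll, rmul_lr, (hAabs a).2]
          rw [rjoin_ne top bot _ _ (by simp [h]) (by simp [h1]) (by simp [h2])]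
  | inr b =>
    cases y with
    | inl a1 =>
      cases z with
      | inl a2 =>
        by_cases h : a1 = a2
        · subst h; rw [rjoin_self, rjoin_self]
        · rw [rjoin_ne top bot _ _ (by simp [h]) (by simp) (by simp)]
          simp only [rmul_rl]
          rw [rjoin_self]
      | inr b2 =>
        by_cases h : b2 = bot
        · subst h; rw [rjoin_bot_right]
          simp only [rmul_rl, rmul_rr, (hBabs b).2]
          rw [rjoin_bot_right]
        · rw [rjoin_ne top bot _ _ (by simp) (by simp) (by simp [h])]
          simp only [rmul_rl, rmul_rr]
          by_cases hb : b = b2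
          · subst hb
            rcases hBsq b with hs | hs
            · rw [hs, rjoin_self]
            · rw [hs, rjoin_bot_right]
          · rw [hBmul b b2 hb, rjoin_bot_right]
    | inr b1 =>
      cases z with
      | inl a2 =>
        by_cases h : b1 = bot
        · subst h; rw [rjoin_bot_left]
          simp only [rmul_rl, rmul_rr, (hBabs b).2]
          rw [rjoin_bot_left]
        · rw [rjoin_ne top bot _ _ (by simp) (by simp [h]) (by simp)]
          simp only [rmul_rl, rmul_rr]
          by_cases hb : b = b1
          · subst hb
            rcases hBsq b with hs | hs
            · rw [hs, rjoin_self]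
            · rw [hs, rjoin_bot_left]
          · rw [hBmul b b1 hb, rjoin_bot_left]
      | inr b2 =>
        by_cases h : b1 = b2
        · subst h; rw [rjoin_self, rjoin_self]
        by_cases h1 : b1 = bot
        · subst h1; rw [rjoin_bot_left]
          simp only [rmul_rr, (hBabs b).2]
          rw [rjoin_bot_left]
        by_cases h2 : b2 = bot
        · subst h2; rw [rjoin_bot_right]
          simp only [rmul_rr, (hBabs b).2]
          rw [rjoin_bot_right]
        · rw [rjoin_ne top bot _ _ (by simp [h]) (by simp [h1]) (by simp [h2])]
          simp only [rmul_rl, rmul_rr]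
          by_cases e1 : b = b1
          · subst e1
            rw [hBmul b b2 h]
            rcases hBsq b with hs | hs
            · rw [hs, rjoin_bot_right]
            · rcases hBnil b h1 hs b2 with e | e
              · exact absurd e h2
              · exact absurd e.symm h
          by_cases e2 : b = b2
          · subst e2
            rw [hBmul b b1 e1]
            rcases hBsq b with hs | hs
            · rw [hs, rjoin_bot_left]
            · rcases hBnil b h2 hs b1 with e | e
              · exact absurd e h1
              · exact absurd e.symm e1
          · rw [hBmul b b1 e1, hBmul b b2 e2]
            have hbbot : b = bot := by
              rcases hBcard b b1 b2 bot with e|e|e|e|e|e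
              · exact absurd e e1
              · exact absurd e e2
              · exact e
              · exact absurd e h
              · exact absurd e h1
              · exact absurd e h2
            rw [hbbot, rjoin_self]

lemma rdist
    (hAabs : ∀ a : A, top * a = top ∧ a * top = top)
    (hAcanc : ∀ x y z : A, (x * y = x * z → x * y ≠ top → y = z) ∧
      (y * x = z * x → y * x ≠ top → y = z))
    (hBabs : ∀ b : B, bot * b = bot ∧ b * bot = bot)
    (hBcard : ∀ x y z w : B, x = y ∨ x = z ∨ x = w ∨ y = z ∨ y = w ∨ z = w)
    (hBmul : ∀ x y : B, x ≠ y → x * y = bot)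
    (hBsq : ∀ b : B, b * b = b ∨ b * b = bot)
    (hBnil : ∀ b : B, b ≠ bot → b * b = bot → ∀ c : B, c = bot ∨ c = b)
    (x y z : A ⊕ B) :
    RMul8 (RJoin8 top bot y z) x = RJoin8 top bot (RMul8 y x) (RMul8 z x) := by
  cases x with
  | inl a =>
    cases y with
    | inl a1 =>
      cases z with
      | inl a2 =>
        by_cases h : a1 = a2
        · subst h; rw [rjoin_self, rjoin_self]
        · rw [rjoin_ne top bot _ _ (by simp [h]) (by simp) (by simp)]
          simp only [rmul_ll, (hAabs a).1]
          by_cases he : a1 * a = a2 * a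
          · have ht : a1 * a = top := by
              by_contra hne
              exact h ((hAcanc a a1 a2).2 he hne)
            rw [← he, rjoin_self, ht]
          · rw [rjoin_ne top bot _ _ (by simp [he]) (by simp) (by simp)]
      | inr b2 =>
        by_cases h : b2 = bot
        · subst h; rw [rjoin_bot_right]
          simp only [rmul_ll, rmul_rl]
          rw [rjoin_bot_right]
        · rw [rjoin_ne top bot _ _ (by simp) (by simp) (by simp [h])]
          simp only [rmul_ll, rmul_rl, (hAabs a).1]
          rw [rjoin_ne top bot _ _ (by simp) (by simp) (by simp [h])]
    | inr b1 =>
      cases z with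
      | inl a2 =>
        by_cases h : b1 = bot
        · subst h; rw [rjoin_bot_left]
          simp only [rmul_ll, rmul_rl]
          rw [rjoin_bot_left]
        · rw [rjoin_ne top bot _ _ (by simp) (by simp [h]) (by simp)]
          simp only [rmul_ll, rmul_rl, (hAabs a).1]
          rw [rjoin_ne top bot _ _ (by simp [h]) (by simp [h]) (by simp)]
      | inr b2 =>
        by_cases h : b1 = b2
        · subst h; rw [rjoin_self, rjoin_self]
        by_cases h1 : b1 = bot
        · subst h1; rw [rjoin_bot_left]
          simp only [rmul_rl]
          rw [rjoin_bot_left]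
        by_cases h2 : b2 = bot
        · subst h2; rw [rjoin_bot_right]
          simp only [rmul_rl]
          rw [rjoin_bot_right]
        · rw [rjoin_ne top bot _ _ (by simp [h]) (by simp [h1]) (by simp [h2])]
          simp only [rmul_ll, rmul_rl, (hAabs a).1]
          rw [rjoin_ne top bot _ _ (by simp [h]) (by simp [h1]) (by simp [h2])]
  | inr b =>
    cases y with
    | inl a1 =>
      cases z with
      | inl a2 =>
        by_cases h : a1 = a2
        · subst h; rw [rjoin_self, rjoin_self]
        · rw [rjoin_ne top bot _ _ (by simp [h]) (by simp) (by simp)]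
          simp only [rmul_lr]
          rw [rjoin_self]
      | inr b2 =>
        by_cases h : b2 = bot
        · subst h; rw [rjoin_bot_right]
          simp only [rmul_lr, rmul_rr, (hBabs b).1]
          rw [rjoin_bot_right]
        · rw [rjoin_ne top bot _ _ (by simp) (by simp) (by simp [h])]
          simp only [rmul_lr, rmul_rr]
          by_cases hb : b2 = b
          · subst hb
            rcases hBsq b2 with hs | hs
            · rw [hs, rjoin_self]
            · rw [hs, rjoin_bot_right]
          · rw [hBmul b2 b hb, rjoin_bot_right]
    | inr b1 =>
      cases z with
      | inl a2 =>
        by_cases h : b1 = bot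
        · subst h; rw [rjoin_bot_left]
          simp only [rmul_lr, rmul_rr, (hBabs b).1]
          rw [rjoin_bot_left]
        · rw [rjoin_ne top bot _ _ (by simp) (by simp [h]) (by simp)]
          simp only [rmul_lr, rmul_rr]
          by_cases hb : b1 = b
          · subst hb
            rcases hBsq b1 with hs | hs
            · rw [hs, rjoin_self]
            · rw [hs, rjoin_bot_left]
          · rw [hBmul b1 b hb, rjoin_bot_left]
      | inr b2 =>
        by_cases h : b1 = b2
        · subst h; rw [rjoin_self, rjoin_self]
        by_cases h1 : b1 = bot
        · subst h1; rw [rjoin_bot_left]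
          simp only [rmul_rr, (hBabs b).1]
          rw [rjoin_bot_left]
        by_cases h2 : b2 = bot
        · subst h2; rw [rjoin_bot_right]
          simp only [rmul_rr, (hBabs b).1]
          rw [rjoin_bot_right]
        · rw [rjoin_ne top bot _ _ (by simp [h]) (by simp [h1]) (by simp [h2])]
          simp only [rmul_lr, rmul_rr]
          by_cases e1 : b1 = b
          · subst e1
            rw [hBmul b2 b1 (fun e => h e.symm)]
            rcases hBsq b1 with hs | hs
            · rw [hs, rjoin_bot_right]
            · rcases hBnil b1 h1 hs b2 with e | e
              · exact absurd e h2
              · exact absurd e.symm h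
          by_cases e2 : b2 = b
          · subst e2
            rw [hBmul b1 b2 h]
            rcases hBsq b2 with hs | hs
            · rw [hs, rjoin_bot_left]
            · rcases hBnil b2 h2 hs b1 with e | e
              · exact absurd e h1
              · exact absurd e e1
          · rw [hBmul b1 b e1, hBmul b2 b e2]
            have hbbot : b = bot := by
              rcases hBcard b b1 b2 bot with e|e|e|e|e|e
              · exact absurd e.symm e1
              · exact absurd e.symm e2
              · exact e
              · exact absurd e h
              · exact absurd e h1
              · exact absurd e h2
            rw [hbbot, rjoin_self]

end Aux

/-- If `A` is a `⊤`-cancellative monoid with zero `⊤` and `B` is a semigroup with zero `⊥`,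
of one of the four admissible kinds, then `A ⊔ B` with the extended multiplication and the
`M_X` order is a lattice-ordered monoid whose multiplication is order-preserving and
distributes over binary joins, and all division sets have maxima; hence it is the reduct of
a residuated lattice based on `M_X` with `X = (A ∪ B) \ {⊥, ⊤}`. -/
theorem stmt_8 {A B : Type*} [Monoid A] [Mul B] (top : A) (bot : B)
    (hAabs : ∀ a : A, top * a = top ∧ a * top = top)
    (hAcanc : ∀ x y z : A, (x * y = x * z → x * y ≠ top → y = z) ∧
      (y * x = z * x → y * x ≠ top → y = z))
    (hBassoc : ∀ x y z : B, x * y * z = x * (y * z))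
    (hBabs : ∀ b : B, bot * b = bot ∧ b * bot = bot)
    (hBcard : ∀ x y z w : B, x = y ∨ x = z ∨ x = w ∨ y = z ∨ y = w ∨ z = w)
    (hBmul : ∀ x y : B, x ≠ y → x * y = bot)
    (hBsq : ∀ b : B, b * b = b ∨ b * b = bot)
    (hBnil : ∀ b : B, b ≠ bot → b * b = bot → ∀ c : B, c = bot ∨ c = b) :
    -- RLe8 is a partial order
    (∀ x : A ⊕ B, RLe8 top bot x x) ∧
    (∀ x y : A ⊕ B, RLe8 top bot x y → RLe8 top bot y x → x = y) ∧
    (∀ x y z : A ⊕ B, RLe8 top bot x y → RLe8 top bot y z → RLe8 top bot x z) ∧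
    -- with bottom `⊥` and top `⊤`
    (∀ x : A ⊕ B, RLe8 top bot (Sum.inr bot) x ∧ RLe8 top bot x (Sum.inl top)) ∧
    -- RJoin8 is the least upper bound and RMeet8 the greatest lower bound
    (∀ x y : A ⊕ B, RLe8 top bot x (RJoin8 top bot x y) ∧ RLe8 top bot y (RJoin8 top bot x y) ∧
      ∀ z, RLe8 top bot x z → RLe8 top bot y z → RLe8 top bot (RJoin8 top bot x y) z) ∧
    (∀ x y : A ⊕ B, RLe8 top bot (RMeet8 top bot x y) x ∧ RLe8 top bot (RMeet8 top bot x y) y ∧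
      ∀ z, RLe8 top bot z x → RLe8 top bot z y → RLe8 top bot z (RMeet8 top bot x y)) ∧
    -- RMul8 is a monoid operation with identity `1 ∈ A`
    (∀ x y z : A ⊕ B, RMul8 (RMul8 x y) z = RMul8 x (RMul8 y z)) ∧
    (∀ x : A ⊕ B, RMul8 (Sum.inl (1 : A)) x = x ∧ RMul8 x (Sum.inl (1 : A)) = x) ∧
    -- multiplication is order-preserving
    (∀ x y z : A ⊕ B, RLe8 top bot y z →
      RLe8 top bot (RMul8 x y) (RMul8 x z) ∧ RLe8 top bot (RMul8 y x) (RMul8 z x)) ∧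
    -- multiplication distributes over binary joins
    (∀ x y z : A ⊕ B, RMul8 x (RJoin8 top bot y z) = RJoin8 top bot (RMul8 x y) (RMul8 x z) ∧
      RMul8 (RJoin8 top bot y z) x = RJoin8 top bot (RMul8 y x) (RMul8 z x)) ∧
    -- the division sets have maxima, so we get the reduct of a residuated lattice
    (∀ x z : A ⊕ B,
      (∃ m, RLe8 top bot (RMul8 x m) z ∧ ∀ y, RLe8 top bot (RMul8 x y) z → RLe8 top bot y m) ∧
      (∃ m, RLe8 top bot (RMul8 m x) z ∧ ∀ y, RLe8 top bot (RMul8 y x) z → RLe8 top bot y m)) := by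
  refine ⟨?_, ?_, ?_, ?_, ?_, ?_, ?_, ?_, ?_, ?_, ?_⟩
  -- refl
  · exact fun x => Or.inl rfl
  -- antisymm
  · intro x y h1 h2
    rcases h1 with rfl | rfl | rfl
    · rfl
    · rcases h2 with h | h | h
      · exact h.symm
      · exact h.symm
      · exact absurd h (by simp)
    · rcases h2 with h | h | rfl
      · exact h.symm
      · exact absurd h (by simp)
      · rfl
  -- trans
  · intro x y z h1 h2
    rcases h1 with rfl | rfl | rfl
    · exact h2
    · exact Or.inr (Or.inl rfl)
    · rcases h2 with rfl | h | rfl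
      · exact Or.inr (Or.inr rfl)
      · exact absurd h (by simp)
      · exact Or.inr (Or.inr rfl)
  -- bot/top
  · exact fun x => ⟨Or.inr (Or.inl rfl), Or.inr (Or.inr rfl)⟩
  -- join lub
  · intro x y
    refine ⟨?_, ?_, ?_⟩
    · unfold RJoin8; split_ifs with h1 h2 h3
      · exact Or.inl rfl
      · exact Or.inr (Or.inl h2)
      · exact Or.inl rfl
      · exact Or.inr (Or.inr rfl)
    · unfold RJoin8; split_ifs with h1 h2 h3
      · exact Or.inl h1.symm
      · exact Or.inl rfl
      · exact Or.inr (Or.inl h3)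
      · exact Or.inr (Or.inr rfl)
    · intro z hx hy
      unfold RJoin8; split_ifs with h1 h2 h3
      · exact hx
      · exact hy
      · exact hx
      · rcases hx with rfl | rfl | rfl
        · rcases hy with rfl | rfl | rfl
          · exact absurd rfl h1
          · exact absurd rfl h3
          · exact Or.inl rfl
        · exact absurd rfl h2
        · exact Or.inl rfl
  -- meet glb
  · intro x y
    refine ⟨?_, ?_, ?_⟩
    · unfold RMeet8; split_ifs with h1 h2 h3
      · exact Or.inl rfl
      · exact Or.inr (Or.inr h2)
      · exact Or.inl rfl
      · exact Or.inr (Or.inl rfl)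
    · unfold RMeet8; split_ifs with h1 h2 h3
      · exact Or.inl h1
      · exact Or.inl rfl
      · exact Or.inr (Or.inr h3)
      · exact Or.inr (Or.inl rfl)
    · intro z hx hy
      unfold RMeet8; split_ifs with h1 h2 h3
      · exact hx
      · exact hy
      · exact hx
      · rcases hx with rfl | rfl | rfl
        · rcases hy with rfl | rfl | h
          · exact absurd rfl h1
          · exact Or.inl rfl
          · exact absurd h h3
        · exact Or.inl rfl
        · exact absurd rfl h2
  -- assoc
  · intro x y z
    cases x <;> cases y <;> cases z <;>
      simp only [rmul_ll, rmul_lr, rmul_rl, rmul_rr, mul_assoc, hBassoc]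
  -- identity
  · intro x
    cases x with
    | inl a => exact ⟨by simp only [rmul_ll, one_mul], by simp only [rmul_ll, mul_one]⟩
    | inr b => exact ⟨rfl, rfl⟩
  -- order-preserving
  · intro x y z h
    rcases h with rfl | rfl | rfl
    · exact ⟨Or.inl rfl, Or.inl rfl⟩
    · constructor
      · rw [rmul_bot_right bot hBabs]; exact Or.inr (Or.inl rfl)
      · rw [rmul_bot_left bot hBabs]; exact Or.inr (Or.inl rfl)
    · constructor
      · cases x with
        | inl a =>
          have : RMul8 (A := A) (B := B) (Sum.inl a) (Sum.inl top) = Sum.inl top := by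
            rw [rmul_ll, (hAabs a).2]
          rw [this]; exact Or.inr (Or.inr rfl)
        | inr b =>
          cases y with
          | inl a' => exact Or.inl rfl
          | inr b' =>
            show RLe8 top bot (Sum.inr (b * b')) (Sum.inr b)
            rcases eq_or_ne b b' with rfl | hne
            · rcases hBsq b with hs | hs
              · rw [hs]; exact Or.inl rfl
              · rw [hs]; exact Or.inr (Or.inl rfl)
            · rw [hBmul b b' hne]; exact Or.inr (Or.inl rfl)
      · cases x with
        | inl a =>
          have : RMul8 (A := A) (B := B) (Sum.inl top) (Sum.inl a) = Sum.inl top := by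
            rw [rmul_ll, (hAabs a).1]
          rw [this]; exact Or.inr (Or.inr rfl)
        | inr b =>
          cases y with
          | inl a' => exact Or.inl rfl
          | inr b' =>
            show RLe8 top bot (Sum.inr (b' * b)) (Sum.inr b)
            rcases eq_or_ne b' b with rfl | hne
            · rcases hBsq b' with hs | hs
              · rw [hs]; exact Or.inl rfl
              · rw [hs]; exact Or.inr (Or.inl rfl)
            · rw [hBmul b' b hne]; exact Or.inr (Or.inl rfl)
  -- distributivity
  · intro x y z
    exact ⟨ldist top bot hAabs hAcanc hBabs hBcard hBmul hBsq hBnil x y z,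
      rdist top bot hAabs hAcanc hBabs hBcard hBmul hBsq hBnil x y z⟩
  -- residuals
  · intro x z
    constructor
    · by_cases hz : z = Sum.inl top
      · subst hz
        exact ⟨Sum.inl top, Or.inr (Or.inr rfl), fun y _ => Or.inr (Or.inr rfl)⟩
      · cases x with
        | inl a =>
          cases z with
          | inl c =>
            have hc : c ≠ top := fun h => hz (by rw [h])
            by_cases h : ∃ a', a * a' = c
            · obtain ⟨a', ha⟩ := h
              refine ⟨Sum.inl a', ?_, ?_⟩
              · show RLe8 top bot (Sum.inl (a * a')) _
                rw [ha]; exact Or.inl rfl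
              · intro y hy
                cases y with
                | inl a'' =>
                  have hq : a * a'' = c := by
                    rcases hy with h' | h' | h'
                    · exact Sum.inl.inj h'
                    · exact absurd h' (by simp)
                    · exact absurd (Sum.inl.inj h') hc
                  have : a'' = a' :=
                    (hAcanc a a'' a').1 (hq.trans ha.symm) (by rw [hq]; exact hc)
                  exact Or.inl (by rw [this])
                | inr b'' =>
                  rcases hy with h' | h' | h'
                  · exact absurd h' (by simp)
                  · exact Or.inr (Or.inl h')
                  · exact absurd (Sum.inl.inj h') hc
            · refine ⟨Sum.inr bot, Or.inr (Or.inl rfl), ?_⟩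
              intro y hy
              cases y with
              | inl a'' =>
                exfalso
                rcases hy with h' | h' | h'
                · exact h ⟨a'', Sum.inl.inj h'⟩
                · exact absurd h' (by simp)
                · exact hc (Sum.inl.inj h')
              | inr b'' =>
                rcases hy with h' | h' | h'
                · exact absurd h' (by simp)
                · exact Or.inl h'
                · exact absurd (Sum.inl.inj h') hc
          | inr c =>
            refine ⟨Sum.inr c, Or.inl rfl, ?_⟩
            intro y hy
            cases y with
            | inl a'' =>
              rcases hy with h' | h' | h'
              · exact absurd h' (by simp)
              · exact absurd h' (by simp)
              · exact absurd h' (by simp)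
            | inr b'' => exact hy
        | inr b =>
          by_cases hb : b = bot
          · refine ⟨Sum.inl top, ?_, fun y _ => Or.inr (Or.inr rfl)⟩
            show RLe8 top bot (Sum.inr b) z
            exact Or.inr (Or.inl (by rw [hb]))
          · by_cases hbz : RLe8 top bot (Sum.inr b) z
            · exact ⟨Sum.inl top, hbz, fun y _ => Or.inr (Or.inr rfl)⟩
            · exact key_left top bot hBabs hBcard hBmul hBsq hBnil b z hb hbz
    · by_cases hz : z = Sum.inl top
      · subst hz
        exact ⟨Sum.inl top, Or.inr (Or.inr rfl), fun y _ => Or.inr (Or.inr rfl)⟩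
      · cases x with
        | inl a =>
          cases z with
          | inl c =>
            have hc : c ≠ top := fun h => hz (by rw [h])
            by_cases h : ∃ a', a' * a = c
            · obtain ⟨a', ha⟩ := h
              refine ⟨Sum.inl a', ?_, ?_⟩
              · show RLe8 top bot (Sum.inl (a' * a)) _
                rw [ha]; exact Or.inl rfl
              · intro y hy
                cases y with
                | inl a'' =>
                  have hq : a'' * a = c := by
                    rcases hy with h' | h' | h'
                    · exact Sum.inl.inj h'
                    · exact absurd h' (by simp)
                    · exact absurd (Sum.inl.inj h') hc
                  have : a'' = a' :=
                    (hAcanc a a'' a').2 (hq.trans ha.symm) (by rw [hq]; exact hc)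
                  exact Or.inl (by rw [this])
                | inr b'' =>
                  rcases hy with h' | h' | h'
                  · exact absurd h' (by simp)
                  · exact Or.inr (Or.inl h')
                  · exact absurd (Sum.inl.inj h') hc
            · refine ⟨Sum.inr bot, Or.inr (Or.inl rfl), ?_⟩
              intro y hy
              cases y with
              | inl a'' =>
                exfalso
                rcases hy with h' | h' | h'
                · exact h ⟨a'', Sum.inl.inj h'⟩
                · exact absurd h' (by simp)
                · exact hc (Sum.inl.inj h')
              | inr b'' =>
                rcases hy with h' | h' | h'
                · exact absurd h' (by simp)
                · exact Or.inl h'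
                · exact absurd (Sum.inl.inj h') hc
          | inr c =>
            refine ⟨Sum.inr c, Or.inl rfl, ?_⟩
            intro y hy
            cases y with
            | inl a'' =>
              rcases hy with h' | h' | h'
              · exact absurd h' (by simp)
              · exact absurd h' (by simp)
              · exact absurd h' (by simp)
            | inr b'' => exact hy
        | inr b =>
          by_cases hb : b = bot
          · refine ⟨Sum.inl top, ?_, fun y _ => Or.inr (Or.inr rfl)⟩
            show RLe8 top bot (Sum.inr b) z
            exact Or.inr (Or.inl (by rw [hb]))
          · by_cases hbz : RLe8 top bot (Sum.inr b) z
            · exact ⟨Sum.inl top, hbz, fun y _ => Or.inr (Or.inr rfl)⟩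
            · exact key_right top bot hBabs hBcard hBmul hBsq hBnil b z hb hbz
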